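/- Let (X,d) be a connected Robinson space with |X| ≥ 2 and d(x,y) > 0 for all distinct x,y ∈ X. Then M_max is a partition of X with |M_max| ≥ 3, and every maximal mmodule of (X,d) is a block. -/

import Mathlib

structure Dissim (X : Type*) where
  d : X → X → ℝ
  symm : ∀ x y, d x y = d y x
  nonneg : ∀ x y, 0 ≤ d x y
  self : ∀ x, d x x = 0

variable {X : Type*}

def Compatible (D : Dissim X) (lt : X → X → Prop) : Prop :=
  ∀ x y z : X, lt x y → lt y z → D.d x y ≤ D.d x z ∧ D.d y z ≤ D.d x z

def IsCompatOrder (D : Dissim X) (lt : X → X → Prop) : Prop :=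
  IsStrictTotalOrder X lt ∧ Compatible D lt

def Robinson (D : Dissim X) : Prop :=
  ∃ lt : X → X → Prop, IsCompatOrder D lt

def IsMmodule (D : Dissim X) (M : Set X) : Prop :=
  ∀ z ∉ M, ∀ x ∈ M, ∀ y ∈ M, D.d z x = D.d z y

def IsInterval (lt : X → X → Prop) (I : Set X) : Prop :=
  ∀ a b c : X, lt a b → lt b c → a ∈ I → c ∈ I → b ∈ I

def IsBlock (D : Dissim X) (Y : Set X) : Prop :=
  ∀ lt : X → X → Prop, IsCompatOrder D lt → IsInterval lt Y

noncomputable def diam (D : Dissim X) (Y : Set X) : ℝ :=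
  sSup (Set.image2 D.d Y Y)

def Gdelta (D : Dissim X) (δ : ℝ) : SimpleGraph X where
  Adj x y := x ≠ y ∧ D.d x y ≠ δ
  symm := by
    constructor
    rintro x y ⟨hxy, hd⟩
    exact ⟨hxy.symm, by rw [D.symm]; exact hd⟩
  loopless := by constructor; rintro x ⟨h, -⟩; exact h rfl

def Gle (D : Dissim X) (δ : ℝ) : SimpleGraph X where
  Adj x y := x ≠ y ∧ D.d x y ≤ δ
  symm := by
    constructor
    rintro x y ⟨hxy, hd⟩
    exact ⟨hxy.symm, by rw [D.symm]; exact hd⟩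
  loopless := by constructor; rintro x ⟨h, -⟩; exact h rfl

def Glt (D : Dissim X) (δ : ℝ) : SimpleGraph X where
  Adj x y := x ≠ y ∧ D.d x y < δ
  symm := by
    constructor
    rintro x y ⟨hxy, hd⟩
    exact ⟨hxy.symm, by rw [D.symm]; exact hd⟩
  loopless := by constructor; rintro x ⟨h, -⟩; exact h rfl

def IsCompOf {V : Type*} (G : SimpleGraph V) (C : Set V) : Prop :=
  ∃ x : V, C = {y | G.Reachable x y}

def MMax (D : Dissim X) : Set (Set X) :=
  {M | IsMmodule D M ∧ M ≠ Set.univ ∧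
    ∀ M' : Set X, IsMmodule D M' → M' ≠ Set.univ → M ⊆ M' → M = M'}

def IsPartition {α : Type*} (P : Set (Set α)) : Prop :=
  (∀ A ∈ P, A.Nonempty) ∧
  (∀ A ∈ P, ∀ B ∈ P, A ≠ B → Disjoint A B) ∧
  ⋃₀ P = Set.univ

def IsCopartition {α : Type*} (P : Set (Set α)) : Prop :=
  IsPartition ((fun M => Mᶜ) '' P)

def SimpleGraph.restrictTo {V : Type*} (G : SimpleGraph V) (S : Set V) : SimpleGraph V where
  Adj x y := x ∈ S ∧ y ∈ S ∧ G.Adj x y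
  symm := by constructor; rintro x y ⟨hx, hy, h⟩; exact ⟨hy, hx, h.symm⟩
  loopless := by constructor; rintro x ⟨-, -, h⟩; exact h.ne rfl

def ConnectedWithin {V : Type*} (G : SimpleGraph V) (S : Set V) : Prop :=
  S.Nonempty ∧ ∀ x ∈ S, ∀ y ∈ S, (G.restrictTo S).Reachable x y

def IsCompWithin {V : Type*} (G : SimpleGraph V) (S : Set V) (C : Set V) : Prop :=
  ∃ x ∈ S, C = {y | (G.restrictTo S).Reachable x y}

def IsStrictTotalOrderOn {α : Type*} (S : Set α) (lt : α → α → Prop) : Prop :=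
  (∀ x ∈ S, ¬ lt x x) ∧
  (∀ x ∈ S, ∀ y ∈ S, ∀ z ∈ S, lt x y → lt y z → lt x z) ∧
  (∀ x ∈ S, ∀ y ∈ S, x ≠ y → (lt x y ∨ lt y x) ∧ ¬ (lt x y ∧ lt y x))

def CompatibleOn (D : Dissim X) (S : Set X) (lt : X → X → Prop) : Prop :=
  ∀ x ∈ S, ∀ y ∈ S, ∀ z ∈ S, lt x y → lt y z → D.d x y ≤ D.d x z ∧ D.d y z ≤ D.d x z

def IsCompatOrderOn (D : Dissim X) (S : Set X) (lt : X → X → Prop) : Prop :=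
  IsStrictTotalOrderOn S lt ∧ CompatibleOn D S lt

def FlatOn (D : Dissim X) (S : Set X) : Prop :=
  ∃ lt : X → X → Prop, IsCompatOrderOn D S lt ∧ (∃ x ∈ S, ∃ y ∈ S, lt x y) ∧
    ∀ lt' : X → X → Prop, IsCompatOrderOn D S lt' →
      (∀ x ∈ S, ∀ y ∈ S, (lt' x y ↔ lt x y)) ∨ (∀ x ∈ S, ∀ y ∈ S, (lt' x y ↔ lt y x))

def Flat (D : Dissim X) : Prop :=
  ∃ lt : X → X → Prop, IsCompatOrder D lt ∧ (∃ x y : X, lt x y) ∧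
    ∀ lt' : X → X → Prop, IsCompatOrder D lt' →
      (∀ x y : X, lt' x y ↔ lt x y) ∨ (∀ x y : X, lt' x y ↔ lt y x)

def IsCopointAt (D : Dissim X) (p : X) (C : Set X) : Prop :=
  IsMmodule D C ∧ C.Nonempty ∧ p ∉ C ∧
  ∀ C' : Set X, IsMmodule D C' → p ∉ C' → C ⊆ C' → C = C'

def bigGraph (D : Dissim X) (δ : ℝ) (I : Set (Set X)) : SimpleGraph (Set X) where
  Adj C C' := C ∈ I ∧ C' ∈ I ∧ C ≠ C' ∧ ∃ x ∈ C, ∃ y ∈ C', δ < D.d x y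
  symm := by
    constructor
    rintro C C' ⟨hC, hC', hne, x, hx, y, hy, hd⟩
    exact ⟨hC', hC, hne.symm, y, hy, x, hx, by rw [D.symm]; exact hd⟩
  loopless := by constructor; rintro C ⟨-, -, hne, -⟩; exact hne rfl

-- walk closure
lemma closed_walk {G : SimpleGraph X} {S : Set X}
    (hS : ∀ x y, x ∈ S → G.Adj x y → y ∈ S) :
    ∀ {a b : X}, G.Walk a b → a ∈ S → b ∈ S := by
  intro a b w
  induction w with
  | nil => exact id
  | cons h _ ih => intro ha; exact ih (hS _ _ ha h)

lemma disconnect {D : Dissim X} {M : Set X} {δ : ℝ}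
    (hconn : ∀ δ : ℝ, 0 < δ → (Gdelta D δ).Connected)
    (hδ : 0 < δ) (hv : ∀ x ∈ M, ∀ y ∉ M, D.d x y = δ)
    {a b : X} (ha : a ∈ M) (hb : b ∉ M) : False := by
  have hreach := (hconn δ hδ).preconnected a b
  obtain ⟨w⟩ := hreach
  refine hb (closed_walk (fun x y hx hadj => ?_) w ha)
  by_contra hy
  exact hadj.2 (hv x hx y hy)

lemma singleton_mmodule (D : Dissim X) (x : X) : IsMmodule D {x} := by
  intro z _ a ha b hb
  rw [Set.mem_singleton_iff] at ha hb; rw [ha, hb]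

lemma singleton_ne_univ [Fintype X] (hcard : 2 ≤ Fintype.card X) (x : X) :
    ({x} : Set X) ≠ Set.univ := by
  obtain ⟨y, hy⟩ := Fintype.exists_ne_of_one_lt_card (by omega) x
  intro h
  have : y ∈ ({x} : Set X) := h.symm ▸ Set.mem_univ y
  exact hy (by simpa using this)

lemma mmodule_union {D : Dissim X} {M M' : Set X} (hM : IsMmodule D M) (hM' : IsMmodule D M')
    {w : X} (hw : w ∈ M) (hw' : w ∈ M') : IsMmodule D (M ∪ M') := by
  intro z hz x hx y hy
  have hzM : z ∉ M := fun h => hz (Or.inl h)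
  have hzM' : z ∉ M' := fun h => hz (Or.inr h)
  have key : ∀ u, u ∈ M ∪ M' → D.d z u = D.d z w := by
    rintro u (h | h)
    · exact hM z hzM u h w hw
    · exact hM' z hzM' u h w hw'
  rw [key x hx, key y hy]

lemma proper_union {D : Dissim X}
    (hpos : ∀ x y : X, x ≠ y → 0 < D.d x y)
    (hconn : ∀ δ : ℝ, 0 < δ → (Gdelta D δ).Connected)
    {M M' : Set X} (hM : IsMmodule D M) (hM' : IsMmodule D M')
    (hMu : M ≠ Set.univ) (hM'u : M' ≠ Set.univ) {w : X} (hw : w ∈ M) (hw' : w ∈ M') :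
    M ∪ M' ≠ Set.univ := by
  intro huniv
  obtain ⟨p, hp⟩ : ∃ p, p ∉ M := by
    by_contra h; push_neg at h; exact hMu (Set.eq_univ_of_forall h)
  obtain ⟨q, hq⟩ : ∃ q, q ∉ M' := by
    by_contra h; push_neg at h; exact hM'u (Set.eq_univ_of_forall h)
  have hpM' : p ∈ M' := (Set.eq_univ_iff_forall.mp huniv p).resolve_left hp
  have hqM : q ∈ M := (Set.eq_univ_iff_forall.mp huniv q).resolve_right hq
  have hpq : p ≠ q := fun h => hp (h ▸ hqM)
  set δ := D.d p q with hδ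
  have hδpos : 0 < δ := hpos p q hpq
  have hv : ∀ x ∈ M, ∀ y ∉ M, D.d x y = δ := by
    intro x hx y hy
    have hyM' : y ∈ M' := (Set.eq_univ_iff_forall.mp huniv y).resolve_left hy
    calc D.d x y = D.d y x := D.symm x y
    _ = D.d y q := hM y hy x hx q hqM
    _ = D.d q y := D.symm y q
    _ = D.d q p := hM' q hq y hyM' p hpM'
    _ = D.d p q := D.symm q p
  exact disconnect hconn hδpos hv hw hp

lemma exists_mmax (D : Dissim X) [Fintype X] (hcard : 2 ≤ Fintype.card X) (x : X) :
    ∃ M ∈ MMax D, x ∈ M := by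
  classical
  set F : Set (Set X) := {M | IsMmodule D M ∧ M ≠ Set.univ ∧ x ∈ M} with hF
  have hne : F.Nonempty :=
    ⟨{x}, singleton_mmodule D x, singleton_ne_univ hcard x, rfl⟩
  obtain ⟨M, hMF, hmax⟩ := Set.Finite.exists_maximalFor id F (Set.toFinite F) hne
  refine ⟨M, ⟨hMF.1, hMF.2.1, fun M' hm hu hsub => ?_⟩, hMF.2.2⟩
  exact Set.Subset.antisymm hsub (hmax ⟨hm, hu, hsub hMF.2.2⟩ hsub)
lemma mmax_block [Fintype X] (D : Dissim X)
    (hpos : ∀ x y : X, x ≠ y → 0 < D.d x y)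
    (hconn : ∀ δ : ℝ, 0 < δ → (Gdelta D δ).Connected)
    {M : Set X} (hM : M ∈ MMax D) : IsBlock D M := by
  obtain ⟨hmod, hMu, hmax⟩ := hM
  intro lt hlt a b c hab hbc ha hc
  by_contra hb
  haveI : IsStrictTotalOrder X lt := hlt.1
  have hcomp := hlt.2
  set δ := D.d b a with hδdef
  have hbm : ∀ m ∈ M, D.d b m = δ := fun m hm => hmod b hb m hm a ha
  -- Step 1: every point of the open interval (a,c) outside M is at distance δ from M
  have step1 : ∀ u, u ∉ M → lt a u → lt u c → ∀ m ∈ M, D.d u m = δ := by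
    intro u hu hau huc m hm
    have hum : ∀ m' ∈ M, D.d u m' = D.d u a := fun m' hm' => hmod u hu m' hm' a ha
    rw [hum m hm]
    rcases trichotomous_of lt u b with h | h | h
    · have h1 := (hcomp a u b hau h).1   -- d a u ≤ d a b
      have h2 := (hcomp u b c h hbc).2   -- d b c ≤ d u c
      have e1 : D.d a b = δ := by rw [D.symm]
      have e2 : D.d b c = δ := hbm c hc
      have e3 : D.d u c = D.d u a := hum c hc
      have e4 : D.d a u = D.d u a := D.symm a u
      linarith
    · rw [h]
    · have h1 := (hcomp a b u hab h).1   -- d a b ≤ d a u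
      have h2 := (hcomp b u c h huc).2   -- d u c ≤ d b c
      have e1 : D.d a b = δ := by rw [D.symm]
      have e2 : D.d b c = δ := hbm c hc
      have e3 : D.d u c = D.d u a := hum c hc
      have e4 : D.d a u = D.d u a := D.symm a u
      linarith
  -- Step 2: N = M ∪ (a,c) is an mmodule
  set N : Set X := M ∪ {u | lt a u ∧ lt u c} with hN
  have hNmod : IsMmodule D N := by
    intro z hz x hx y hy
    have hzM : z ∉ M := fun h => hz (Or.inl h)
    have hzI : ¬ (lt a z ∧ lt z c) := fun h => hz (Or.inr h)
    have hza : z ≠ a := fun h => hzM (h ▸ ha)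
    have hzc : z ≠ c := fun h => hzM (h ▸ hc)
    have hside : lt z a ∨ lt c z := by
      rcases trichotomous_of lt z a with h | h | h
      · exact Or.inl h
      · exact absurd h hza
      · rcases trichotomous_of lt z c with h' | h' | h'
        · exact absurd ⟨h, h'⟩ hzI
        · exact absurd h' hzc
        · exact Or.inr h'
    have key : ∀ x ∈ N, D.d z x = D.d z a := by
      rintro x (hx | ⟨hax, hxc⟩)
      · exact hmod z hzM x hx a ha
      · have hzczazero : D.d z c = D.d z a := hmod z hzM c hc a ha
        rcases hside with h | h
        · have h1 := (hcomp z a x h hax).1   -- d z a ≤ d z x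
          have h2 := (hcomp z x c (trans_of lt h hax) hxc).1 -- d z x ≤ d z c
          linarith
        · have h1 := (hcomp a x z hax (trans_of lt hxc h)).2  -- d x z ≤ d a z
          have h2 := (hcomp x c z hxc h).2  -- d c z ≤ d x z
          have e1 : D.d x z = D.d z x := D.symm x z
          have e2 : D.d a z = D.d z a := D.symm a z
          have e3 : D.d c z = D.d z c := D.symm c z
          linarith
    rw [key x hx, key y hy]
  -- Step 3: N = univ, else maximality of M is violated
  have hbN : b ∈ N := Or.inr ⟨hab, hbc⟩
  have hNuniv : N = Set.univ := by
    by_contra hNu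
    have := hmax N hNmod hNu Set.subset_union_left
    exact hb (this ▸ hbN)
  -- Step 4: disconnection
  have hδpos : 0 < δ := hpos b a (fun h => hb (h ▸ ha))
  have hv : ∀ x ∈ M, ∀ y ∉ M, D.d x y = δ := by
    intro x hx y hy
    have hyN : y ∈ N := hNuniv ▸ Set.mem_univ y
    rcases hyN with h | ⟨hay, hyc⟩
    · exact absurd h hy
    · rw [D.symm]; exact step1 y hy hay hyc x hx
  exact disconnect hconn hδpos hv ha hb

/-- in a connected Robinson space, M_max is a partition of X with at
least 3 parts and every maximal mmodule is a block. -/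
theorem stmt10 [Fintype X] [Nonempty X] (D : Dissim X)
    (hcard : 2 ≤ Fintype.card X)
    (hpos : ∀ x y : X, x ≠ y → 0 < D.d x y)
    (hRob : Robinson D)
    (hconn : ∀ δ : ℝ, 0 < δ → (Gdelta D δ).Connected) :
    IsPartition (MMax D) ∧ 3 ≤ (MMax D).ncard ∧ ∀ M ∈ MMax D, IsBlock D M := by
  classical
  have hpart : IsPartition (MMax D) := by
    refine ⟨?_, ?_, ?_⟩
    · rintro A ⟨hmod, hAu, hmax⟩
      rcases A.eq_empty_or_nonempty with h | h
      · exfalso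
        obtain ⟨x⟩ := ‹Nonempty X›
        have heq := hmax {x} (singleton_mmodule D x) (singleton_ne_univ hcard x)
          (h ▸ Set.empty_subset _)
        rw [h] at heq
        exact (Set.singleton_nonempty x).ne_empty heq.symm
      · exact h
    · rintro A ⟨hAmod, hAu, hAmax⟩ B ⟨hBmod, hBu, hBmax⟩ hne
      by_contra hnd
      rw [Set.not_disjoint_iff] at hnd
      obtain ⟨w, hwA, hwB⟩ := hnd
      have hmod := mmodule_union hAmod hBmod hwA hwB
      have hu := proper_union hpos hconn hAmod hBmod hAu hBu hwA hwB
      have h1 := hAmax _ hmod hu Set.subset_union_left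
      have h2 := hBmax _ hmod hu Set.subset_union_right
      exact hne (h1.trans h2.symm)
    · apply Set.eq_univ_of_forall
      intro x
      obtain ⟨M, hM, hx⟩ := exists_mmax D hcard x
      exact Set.mem_sUnion.mpr ⟨M, hM, hx⟩
  have h3 : 3 ≤ (MMax D).ncard := by
    by_contra h
    push_neg at h
    have hfin : (MMax D).Finite := Set.toFinite _
    have hnem : (MMax D).Nonempty := by
      obtain ⟨x⟩ := ‹Nonempty X›
      obtain ⟨M, hM, _⟩ := exists_mmax D hcard x
      exact ⟨M, hM⟩
    have hpos' : 0 < (MMax D).ncard := (Set.ncard_pos hfin).mpr hnem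
    have hcase : (MMax D).ncard = 1 ∨ (MMax D).ncard = 2 := by omega
    rcases hcase with h1 | h2
    · obtain ⟨A, hA⟩ := Set.ncard_eq_one.mp h1
      have hAm : A ∈ MMax D := hA ▸ rfl
      have : A = Set.univ := by
        have := hpart.2.2
        rw [hA, Set.sUnion_singleton] at this
        exact this
      exact hAm.2.1 this
    · obtain ⟨A, B, hAB, hABeq⟩ := Set.ncard_eq_two.mp h2
      have hAm : A ∈ MMax D := hABeq ▸ Set.mem_insert A {B}
      have hBm : B ∈ MMax D := hABeq ▸ Set.mem_insert_of_mem A rfl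
      have huniv : A ∪ B = Set.univ := by
        have := hpart.2.2
        rw [hABeq] at this
        simpa using this
      have hdisj : Disjoint A B := hpart.2.1 A hAm B hBm hAB
      obtain ⟨x₀, hx₀⟩ := hpart.1 A hAm
      obtain ⟨y₀, hy₀⟩ := hpart.1 B hBm
      have hx₀B : x₀ ∉ B := fun h => (Set.disjoint_left.mp hdisj hx₀) h
      have hy₀A : y₀ ∉ A := fun h => (Set.disjoint_left.mp hdisj h) hy₀
      have hxy : x₀ ≠ y₀ := fun h => hy₀A (h ▸ hx₀)
      have hδpos : 0 < D.d x₀ y₀ := hpos x₀ y₀ hxy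
      have hv : ∀ x ∈ A, ∀ y ∉ A, D.d x y = D.d x₀ y₀ := by
        intro x hx y hy
        have hyB : y ∈ B := by
          have := Set.eq_univ_iff_forall.mp huniv y
          exact this.resolve_left hy
        calc D.d x y = D.d y x := D.symm x y
        _ = D.d y x₀ := hAm.1 y hy x hx x₀ hx₀
        _ = D.d x₀ y := D.symm y x₀
        _ = D.d x₀ y₀ := hBm.1 x₀ hx₀B y hyB y₀ hy₀
      exact disconnect hconn hδpos hv hx₀ hy₀A
  exact ⟨hpart, h3, fun M hM => mmax_block D hpos hconn hM⟩
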